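/- Let X be a finite abelian group of cardinality N. For any nonzero function ψ : X → ℂ, let N_t be the number of x ∈ X with ψ(x) ≠ 0 and N_w the number of characters γ ∈ X̂ with ψ̂(γ) ≠ 0, where ψ̂(γ) = Σ_{x∈X} ψ(x) γ(−x). Then N_t · N_w ≥ N, and equality is attained when ψ is a character or a delta function. -/

import Mathlib

open Finset

namespace DonohoStarkAux

variable {X : Type*} [CommGroup X] [Fintype X]

/-- Circle-valued characters of `X` correspond to complex additive characters of `Additive X`. -/
noncomputable def charEquiv (X : Type*) [CommGroup X] [Fintype X] :
    (X →* Circle) ≃ AddChar (Additive X) ℂ where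
  toFun γ :=
    { toFun := fun a => (γ a.toMul : ℂ)
      map_zero_eq_one' := by simp
      map_add_eq_mul' := fun a b => by simp [toMul_add] }
  invFun ψ :=
    { toFun := fun x =>
        (⟨ψ (Additive.ofMul x), mem_sphere_zero_iff_norm.2 <| ψ.norm_apply _⟩ : Circle)
      map_one' := by ext; simp
      map_mul' := fun a b => by ext; simp [AddChar.map_add_eq_mul]; rfl }
  left_inv γ := by ext x; rfl
  right_inv ψ := by ext a; rfl

lemma charEquiv_apply (γ : X →* Circle) (a : Additive X) :
    charEquiv X γ a = (γ a.toMul : ℂ) := rfl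

noncomputable instance : Fintype (X →* Circle) := Fintype.ofEquiv _ (charEquiv X).symm

lemma card_chars : Fintype.card (X →* Circle) = Fintype.card X := by
  rw [Fintype.card_congr (charEquiv X), AddChar.card_eq]
  exact Fintype.card_congr Additive.toMul

lemma charEquiv_one : charEquiv X (1 : X →* Circle) = 0 := by
  ext a
  simp [charEquiv_apply]

/-- Orthogonality: the sum of a character over the group. -/
lemma sum_char_eq [DecidableEq (X →* Circle)] (γ : X →* Circle) :
    ∑ x : X, (γ x : ℂ) = if γ = 1 then (Fintype.card X : ℂ) else 0 := by
  classical
  have h := AddChar.sum_eq_ite (charEquiv X γ)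
  have h2 : ∑ x : X, (γ x : ℂ) = ∑ a : Additive X, charEquiv X γ a :=
    Fintype.sum_equiv Additive.ofMul _ _ fun x => rfl
  have hiff : charEquiv X γ = 0 ↔ γ = 1 := by
    rw [← charEquiv_one, (charEquiv X).injective.eq_iff]
  rw [h2, h]
  simp only [hiff, show Fintype.card (Additive X) = Fintype.card X from
    Fintype.card_congr Additive.toMul]

/-- The sum of all characters evaluated at a point. -/
lemma sum_chars_apply [DecidableEq X] (z : X) :
    ∑ γ : X →* Circle, (γ z : ℂ) = if z = 1 then (Fintype.card X : ℂ) else 0 := by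
  classical
  have h := AddChar.sum_apply_eq_ite (α := Additive X) (Additive.ofMul z)
  have h2 : ∑ γ : X →* Circle, (γ z : ℂ)
      = ∑ ψ : AddChar (Additive X) ℂ, ψ (Additive.ofMul z) :=
    Fintype.sum_equiv (charEquiv X) _ _ fun γ => rfl
  have hiff : Additive.ofMul z = 0 ↔ z = 1 := by simp
  rw [h2, h]
  simp only [hiff, show Fintype.card (Additive X) = Fintype.card X from
    Fintype.card_congr Additive.toMul]

end DonohoStarkAux

namespace DonohoStarkAux

variable {X : Type*} [CommGroup X] [Fintype X]

lemma main_ineq (ψ : X → ℂ) (hψ : ψ ≠ 0)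
    [DecidablePred fun x : X => ψ x ≠ 0]
    [DecidablePred fun γ : X →* Circle => (∑ x, ψ x * ((γ x)⁻¹ : ℂ)) ≠ 0] :
    Fintype.card X ≤
      (univ.filter fun x : X => ψ x ≠ 0).card *
        (univ.filter fun γ : X →* Circle => (∑ x, ψ x * ((γ x)⁻¹ : ℂ)) ≠ 0).card := by
  classical
  set T := univ.filter fun x : X => ψ x ≠ 0 with hT
  set W := univ.filter (fun γ : X →* Circle => (∑ x, ψ x * ((γ x)⁻¹ : ℂ)) ≠ 0) with hW
  obtain ⟨x₀, -, hx₀⟩ := Finset.exists_max_image (univ : Finset X) (fun x => ‖ψ x‖)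
    Finset.univ_nonempty
  obtain ⟨xne, hxne⟩ := Function.ne_iff.mp hψ
  have hxne' : ψ xne ≠ 0 := hxne
  have hMpos : 0 < ‖ψ x₀‖ :=
    lt_of_lt_of_le (norm_pos_iff.mpr hxne') (hx₀ xne (mem_univ _))
  have hFbound : ∀ γ : X →* Circle,
      ‖∑ x, ψ x * ((γ x)⁻¹ : ℂ)‖ ≤ (T.card : ℝ) * ‖ψ x₀‖ := by
    intro γ
    calc ‖∑ x, ψ x * ((γ x)⁻¹ : ℂ)‖ ≤ ∑ x, ‖ψ x * ((γ x)⁻¹ : ℂ)‖ := norm_sum_le _ _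
      _ = ∑ x, ‖ψ x‖ := by
          refine Finset.sum_congr rfl fun x _ => ?_
          rw [norm_mul]
          simp [Circle.norm_coe]
      _ = ∑ x ∈ T, ‖ψ x‖ := by
          rw [hT]
          exact (Finset.sum_filter_of_ne fun x _ h => norm_ne_zero_iff.mp h).symm
      _ ≤ T.card • ‖ψ x₀‖ := Finset.sum_le_card_nsmul T _ _ fun x _ => hx₀ x (mem_univ x)
      _ = (T.card : ℝ) * ‖ψ x₀‖ := nsmul_eq_mul _ _
  have hinv : ∑ γ : X →* Circle, (∑ x, ψ x * ((γ x)⁻¹ : ℂ)) * (γ x₀ : ℂ)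
      = (Fintype.card X : ℂ) * ψ x₀ := by
    have step1 : ∀ γ : X →* Circle, (∑ x, ψ x * ((γ x)⁻¹ : ℂ)) * (γ x₀ : ℂ)
        = ∑ y, ψ y * ((γ (x₀ * y⁻¹) : ℂ)) := by
      intro γ
      rw [Finset.sum_mul]
      refine Finset.sum_congr rfl fun y _ => ?_
      rw [map_mul, map_inv]
      push_cast
      ring
    calc ∑ γ : X →* Circle, (∑ x, ψ x * ((γ x)⁻¹ : ℂ)) * (γ x₀ : ℂ)
        = ∑ γ : X →* Circle, ∑ y, ψ y * (γ (x₀ * y⁻¹) : ℂ) :=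
          Finset.sum_congr rfl fun γ _ => step1 γ
      _ = ∑ y, ∑ γ : X →* Circle, ψ y * (γ (x₀ * y⁻¹) : ℂ) := Finset.sum_comm
      _ = ∑ y, ψ y * (if x₀ * y⁻¹ = 1 then (Fintype.card X : ℂ) else 0) := by
          refine Finset.sum_congr rfl fun y _ => ?_
          rw [← Finset.mul_sum, sum_chars_apply]
      _ = (Fintype.card X : ℂ) * ψ x₀ := by
          rw [Finset.sum_eq_single x₀]
          · simp [mul_comm]
          · intro b _ hb
            have hne : ¬ (x₀ * b⁻¹ = 1) := by
              rw [mul_inv_eq_one]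
              exact fun h => hb h.symm
            simp [hne]
          · simp
  have key : (Fintype.card X : ℝ) * ‖ψ x₀‖ ≤ (W.card : ℝ) * ((T.card : ℝ) * ‖ψ x₀‖) := by
    calc (Fintype.card X : ℝ) * ‖ψ x₀‖ = ‖(Fintype.card X : ℂ) * ψ x₀‖ := by
          rw [norm_mul]
          simp
      _ = ‖∑ γ : X →* Circle, (∑ x, ψ x * ((γ x)⁻¹ : ℂ)) * (γ x₀ : ℂ)‖ := by rw [hinv]
      _ = ‖∑ γ ∈ W, (∑ x, ψ x * ((γ x)⁻¹ : ℂ)) * (γ x₀ : ℂ)‖ := by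
          rw [hW]
          exact congrArg norm (Finset.sum_filter_of_ne fun γ _ h
            (hc : (∑ x, ψ x * ((γ x)⁻¹ : ℂ)) = 0) => h (by rw [hc, zero_mul])).symm
      _ ≤ ∑ γ ∈ W, ‖(∑ x, ψ x * ((γ x)⁻¹ : ℂ)) * (γ x₀ : ℂ)‖ := norm_sum_le _ _
      _ = ∑ γ ∈ W, ‖∑ x, ψ x * ((γ x)⁻¹ : ℂ)‖ := by
          refine Finset.sum_congr rfl fun γ _ => ?_
          rw [norm_mul, Circle.norm_coe, mul_one]
      _ ≤ W.card • ((T.card : ℝ) * ‖ψ x₀‖) :=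
          Finset.sum_le_card_nsmul _ _ _ fun γ _ => hFbound γ
      _ = (W.card : ℝ) * ((T.card : ℝ) * ‖ψ x₀‖) := nsmul_eq_mul _ _
  have h3 : (Fintype.card X : ℝ) ≤ (T.card : ℝ) * W.card :=
    le_of_mul_le_mul_right (key.trans_eq (by ring)) hMpos
  exact_mod_cast h3

end DonohoStarkAux

/-- Donoho–Stark uncertainty principle for a finite abelian group `X` of cardinality
`N`: for every nonzero `ψ : X → ℂ`, the number `N_t` of points where `ψ ≠ 0` and the
number `N_w` of characters where `ψ̂ ≠ 0` satisfy `N_t · N_w ≥ N`; moreover equality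
holds when `ψ` is a character or a delta function. -/
theorem donoho_stark_uncertainty
    {X : Type*} [CommGroup X] [Fintype X] :
    (∀ ψ : X → ℂ, ψ ≠ 0 →
      Nat.card X ≤ Nat.card {x : X // ψ x ≠ 0} *
        Nat.card {γ : X →* Circle // (∑ x, ψ x * ((γ x)⁻¹ : ℂ)) ≠ 0}) ∧
    (∀ γ₀ : X →* Circle,
      Nat.card {x : X // (γ₀ x : ℂ) ≠ 0} *
        Nat.card {γ : X →* Circle // (∑ x, (γ₀ x : ℂ) * ((γ x)⁻¹ : ℂ)) ≠ 0} =
          Nat.card X) ∧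
    (∀ x₀ : X,
      Nat.card {x : X // Set.indicator {x₀} (fun _ => (1 : ℂ)) x ≠ 0} *
        Nat.card {γ : X →* Circle //
          (∑ x, Set.indicator {x₀} (fun _ => (1 : ℂ)) x * ((γ x)⁻¹ : ℂ)) ≠ 0} =
            Nat.card X) := by
  classical
  refine ⟨?_, ?_, ?_⟩
  · intro ψ hψ
    rw [Nat.card_eq_fintype_card, Nat.card_eq_fintype_card, Nat.card_eq_fintype_card,
      Fintype.card_subtype, Fintype.card_subtype]
    exact DonohoStarkAux.main_ineq ψ hψ
  · intro γ₀
    have h1 : Nat.card {x : X // (γ₀ x : ℂ) ≠ 0} = Nat.card X :=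
      Nat.card_congr (Equiv.subtypeUnivEquiv fun x => Circle.coe_ne_zero _)
    have hiff : ∀ γ : X →* Circle, (∑ x, (γ₀ x : ℂ) * ((γ x)⁻¹ : ℂ)) ≠ 0 ↔ γ = γ₀ := by
      intro γ
      have hsum : ∑ x, (γ₀ x : ℂ) * ((γ x)⁻¹ : ℂ) = ∑ x, ((γ₀ * γ⁻¹) x : ℂ) := by
        refine Finset.sum_congr rfl fun x _ => ?_
        push_cast [MonoidHom.mul_apply, MonoidHom.inv_apply]
        ring
      rw [hsum, DonohoStarkAux.sum_char_eq]
      by_cases hc : γ = γ₀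
      · subst hc
        simp [Fintype.card_ne_zero]
      · have hne : ¬ (γ₀ * γ⁻¹ = 1) := by
          rw [mul_inv_eq_one]
          exact fun h => hc h.symm
        simp [hne, hc]
    have h2 : Nat.card {γ : X →* Circle // (∑ x, (γ₀ x : ℂ) * ((γ x)⁻¹ : ℂ)) ≠ 0} = 1 := by
      rw [Nat.card_congr (Equiv.subtypeEquivRight hiff)]
      haveI : Unique {γ : X →* Circle // γ = γ₀} :=
        ⟨⟨⟨γ₀, rfl⟩⟩, by rintro ⟨γ, rfl⟩; rfl⟩
      exact Nat.card_unique
    rw [h1, h2, mul_one]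
  · intro x₀
    have hiff1 : ∀ x : X, Set.indicator {x₀} (fun _ => (1 : ℂ)) x ≠ 0 ↔ x = x₀ := by
      intro x
      simp [Set.indicator_apply]
    have h1 : Nat.card {x : X // Set.indicator {x₀} (fun _ => (1 : ℂ)) x ≠ 0} = 1 := by
      rw [Nat.card_congr (Equiv.subtypeEquivRight hiff1)]
      haveI : Unique {x : X // x = x₀} := ⟨⟨⟨x₀, rfl⟩⟩, by rintro ⟨x, rfl⟩; rfl⟩
      exact Nat.card_unique
    have hsum : ∀ γ : X →* Circle,
        (∑ x, Set.indicator {x₀} (fun _ => (1 : ℂ)) x * ((γ x)⁻¹ : ℂ)) = ((γ x₀)⁻¹ : ℂ) := by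
      intro γ
      rw [Finset.sum_eq_single x₀]
      · simp
      · intro b _ hb
        simp [Set.indicator_apply, hb]
      · simp
    have h2 : Nat.card {γ : X →* Circle //
        (∑ x, Set.indicator {x₀} (fun _ => (1 : ℂ)) x * ((γ x)⁻¹ : ℂ)) ≠ 0}
        = Nat.card (X →* Circle) :=
      Nat.card_congr (Equiv.subtypeUnivEquiv fun γ => by
        rw [hsum γ]
        exact inv_ne_zero (Circle.coe_ne_zero _))
    rw [h1, h2, one_mul, Nat.card_eq_fintype_card, Nat.card_eq_fintype_card,
      DonohoStarkAux.card_chars]
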